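/- Let Q₀ ≥ 1 and m > n ≥ 1 be integers, let A′ ∈ ℤ^{n×(m−n)}, and let A = [I_n | A′] be in Hermite normal form. Suppose u ∈ ℤⁿ, x = (x₀, x₁) ∈ ℤⁿ × ℤ^{m−n}, and e ∈ ℤⁿ satisfy A·x ≡ u − e (mod Q₀), ‖x‖ ≤ β, and ‖e‖ ≤ α. Then x* = (x₀ + e, x₁) ∈ ℤᵐ satisfies A·x* ≡ u (mod Q₀) and ‖x*‖ ≤ α + β. (Any approximate ISIS solution for a public matrix in Hermite normal form can be converted into an exact ISIS solution with norm at most α + β; this is the nontrivial direction of the equivalence HNF.ISIS_{n,m,Q,α+β} ≤ HNF.ApproxISIS_{n,m,Q,α,β}.) -/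

import Mathlib

/-- **From approximate ISIS solutions to exact ISIS solutions in HNF.**
For `A = [I_n | A']` in Hermite normal form (`m = n + k`, `k = m - n ≥ 1`), if
`A·x ≡ u - e (mod Q₀)` with `x = (x₀, x₁)`, `‖x‖ ≤ β` and `‖e‖ ≤ α`, then
`x* = (x₀ + e, x₁)` satisfies `A·x* ≡ u (mod Q₀)` and `‖x*‖ ≤ α + β`. -/
theorem stmt_9 (Q₀ : ℤ) (hQ₀ : 1 ≤ Q₀) (n k : ℕ) (hn : 1 ≤ n) (hk : 1 ≤ k)
    (A' : Matrix (Fin n) (Fin k) ℤ) (α β : ℝ)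
    (u x₀ e : Fin n → ℤ) (x₁ : Fin k → ℤ)
    (hcong : ∀ i, Q₀ ∣
      ((Matrix.fromCols (1 : Matrix (Fin n) (Fin n) ℤ) A').mulVec (Sum.elim x₀ x₁) i
        - (u i - e i)))
    (hx : Real.sqrt ((∑ i, ((x₀ i : ℝ)) ^ 2) + ∑ j, ((x₁ j : ℝ)) ^ 2) ≤ β)
    (he : Real.sqrt (∑ i, ((e i : ℝ)) ^ 2) ≤ α) :
    (∀ i, Q₀ ∣
      ((Matrix.fromCols (1 : Matrix (Fin n) (Fin n) ℤ) A').mulVec (Sum.elim (x₀ + e) x₁) i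
        - u i))
    ∧ Real.sqrt ((∑ i, ((x₀ i + e i : ℤ) : ℝ) ^ 2) + ∑ j, ((x₁ j : ℝ)) ^ 2) ≤ α + β := by
  constructor
  · intro i
    have h := hcong i
    have key : ∀ y : Fin n → ℤ,
        (Matrix.fromCols (1 : Matrix (Fin n) (Fin n) ℤ) A').mulVec (Sum.elim y x₁) i
          = y i + A'.mulVec x₁ i := by
      intro y
      rw [Matrix.fromCols_mulVec_sumElim]
      simp [Matrix.one_mulVec]
    rw [key] at h ⊢
    have : x₀ i + e i + A'.mulVec x₁ i - u i
        = (x₀ i + A'.mulVec x₁ i - (u i - e i)) := by ring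
    simpa [this] using h
  · -- norm bound via EuclideanSpace triangle inequality
    set V := EuclideanSpace ℝ (Fin n ⊕ Fin k)
    let v : V := WithLp.toLp 2 (Sum.elim (fun i => (x₀ i : ℝ)) (fun j => (x₁ j : ℝ)))
    let w : V := WithLp.toLp 2 (Sum.elim (fun i => (e i : ℝ)) (fun (_ : Fin k) => (0 : ℝ)))
    have hv : ‖v‖ = Real.sqrt ((∑ i, ((x₀ i : ℝ)) ^ 2) + ∑ j, ((x₁ j : ℝ)) ^ 2) := by
      rw [EuclideanSpace.norm_eq]
      congr 1
      rw [Fintype.sum_sum_type]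
      simp [v, sq_abs]
    have hw : ‖w‖ = Real.sqrt (∑ i, ((e i : ℝ)) ^ 2) := by
      rw [EuclideanSpace.norm_eq]
      congr 1
      rw [Fintype.sum_sum_type]
      simp [w, sq_abs]
    have hsum : v + w = WithLp.toLp 2 (Sum.elim (fun i => ((x₀ i + e i : ℤ) : ℝ)) (fun j => (x₁ j : ℝ))) := by
      ext s
      cases s with
      | inl i => show v (Sum.inl i) + w (Sum.inl i) = _; simp [v, w]
      | inr j => show v (Sum.inr j) + w (Sum.inr j) = _; simp [v, w]
    have hvw : ‖v + w‖ = Real.sqrt ((∑ i, ((x₀ i + e i : ℤ) : ℝ) ^ 2) + ∑ j, ((x₁ j : ℝ)) ^ 2) := by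
      rw [hsum, EuclideanSpace.norm_eq]
      congr 1
      rw [Fintype.sum_sum_type]
      simp [sq_abs]
    calc Real.sqrt ((∑ i, ((x₀ i + e i : ℤ) : ℝ) ^ 2) + ∑ j, ((x₁ j : ℝ)) ^ 2)
        = ‖v + w‖ := hvw.symm
      _ ≤ ‖w‖ + ‖v‖ := by rw [add_comm v w]; exact norm_add_le w v
      _ ≤ α + β := add_le_add (hw ▸ he) (hv ▸ hx)
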